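/- Let G=(V,E) be a locally finite graph with symmetric positive edge weights, μ(x) ≥ μ_min > 0, h satisfying (H1) and (H2), and f satisfying (F1) and (F2) with f(x,s)=0 for s ≤ 0. Then the functional J(u) = (1/2)‖u‖_ℋ² − ∫_V F(x,u)dμ satisfies the Palais–Smale condition at every level c ∈ ℝ: if (u_k) ⊂ ℋ satisfies J(u_k) → c and J'(u_k) → 0 (i.e. sup over ‖φ‖_ℋ ≤ 1 of |⟨u_k,φ⟩_ℋ − ∫_V f(x,u_k)φ dμ| → 0), then some subsequence of (u_k) converges strongly in ℋ. -/

import Mathlib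

open Filter Topology

namespace GraphNLE

variable {V : Type*}

/-- Integral of `g` over `V` w.r.t. the measure `μ`: `∫_V g dμ = Σ_x μ(x) g(x)`. -/
noncomputable def intV (μ g : V → ℝ) : ℝ := ∑' x, μ x * g x

/-- The graph (μ-)Laplacian: `Δu(x) = (1/μ(x)) Σ_{y} w_{xy} (u(y)-u(x))`. -/
noncomputable def lap (w : V → V → ℝ) (μ u : V → ℝ) (x : V) : ℝ :=
  (1 / μ x) * ∑' y, w x y * (u y - u x)

/-- Squared length of the gradient: `|∇u|²(x) = (1/(2μ(x))) Σ_y w_{xy} (u(y)-u(x))²`. -/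
noncomputable def gradSq (w : V → V → ℝ) (μ u : V → ℝ) (x : V) : ℝ :=
  (1 / (2 * μ x)) * ∑' y, w x y * (u y - u x) ^ 2

/-- The gradient form `Γ(u,v)(x) = (1/(2μ(x))) Σ_y w_{xy} (u(y)-u(x))(v(y)-v(x))`. -/
noncomputable def gamma (w : V → V → ℝ) (μ u v : V → ℝ) (x : V) : ℝ :=
  (1 / (2 * μ x)) * ∑' y, w x y * (u y - u x) * (v y - v x)

/-- Membership in `W^{1,2}(V)`: finite `∫(|∇u|² + u²) dμ`. -/
def memW (w : V → V → ℝ) (μ u : V → ℝ) : Prop :=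
  Summable (fun x => μ x * gradSq w μ u x) ∧ Summable (fun x => μ x * u x ^ 2)

/-- The `W^{1,2}` norm `(∫_V (|∇u|² + u²) dμ)^{1/2}`. -/
noncomputable def normW (w : V → V → ℝ) (μ u : V → ℝ) : ℝ :=
  Real.sqrt (intV μ fun x => gradSq w μ u x + u x ^ 2)

/-- Membership in the space `ℋ`: finite `∫(|∇u|² + h u²) dμ`. -/
def memH (w : V → V → ℝ) (μ h u : V → ℝ) : Prop :=
  Summable (fun x => μ x * gradSq w μ u x) ∧ Summable (fun x => μ x * (h x * u x ^ 2))

/-- The norm of `ℋ`: `‖u‖_ℋ = (∫_V (|∇u|² + h u²) dμ)^{1/2}`. -/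
noncomputable def normH (w : V → V → ℝ) (μ h u : V → ℝ) : ℝ :=
  Real.sqrt (intV μ fun x => gradSq w μ u x + h x * u x ^ 2)

/-- The inner product of `ℋ`: `⟨u,v⟩_ℋ = ∫_V (Γ(u,v) + h u v) dμ`. -/
noncomputable def innerH (w : V → V → ℝ) (μ h u v : V → ℝ) : ℝ :=
  intV μ fun x => gamma w μ u v x + h x * u x * v x

/-- `λ₁ = inf { ∫(|∇u|² + h u²) dμ : u ∈ ℋ, ∫ u² dμ = 1 }`. -/
noncomputable def lambda1 (w : V → V → ℝ) (μ h : V → ℝ) : ℝ :=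
  sInf {t : ℝ | ∃ u : V → ℝ, memH w μ h u ∧ intV μ (fun x => u x ^ 2) = 1 ∧
    intV μ (fun x => gradSq w μ u x + h x * u x ^ 2) = t}

/-- The primitive `F(x,s) = ∫_0^s f(x,t) dt`. -/
noncomputable def Fint (f : V → ℝ → ℝ) (x : V) (s : ℝ) : ℝ := ∫ t in (0:ℝ)..s, f x t

/-- The functional `J(u) = (1/2)∫(|∇u|² + h u²) dμ − ∫ F(x,u) dμ`. -/
noncomputable def energy (w : V → V → ℝ) (μ h : V → ℝ) (f : V → ℝ → ℝ) (u : V → ℝ) : ℝ :=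
  (1 / 2) * intV μ (fun x => gradSq w μ u x + h x * u x ^ 2) -
    intV μ (fun x => Fint f x (u x))

/-- The perturbed functional `J_ε(u) = J(u) − ε ∫ g u dμ`. -/
noncomputable def energyP (w : V → V → ℝ) (μ h : V → ℝ) (f : V → ℝ → ℝ) (g : V → ℝ)
    (ε : ℝ) (u : V → ℝ) : ℝ :=
  energy w μ h f u - ε * intV μ (fun x => g x * u x)

/-- Weak convergence `u_k ⇀ u` in the Hilbert space `ℋ`. -/
def weakConvH (w : V → V → ℝ) (μ h : V → ℝ) (uk : ℕ → V → ℝ) (u : V → ℝ) : Prop :=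
  ∀ v : V → ℝ, memH w μ h v →
    Tendsto (fun k => innerH w μ h (uk k) v) atTop (nhds (innerH w μ h u v))

/-- The `L^q(V,μ)` norm for finite `q`. -/
noncomputable def LqNorm (μ : V → ℝ) (q : ℝ) (u : V → ℝ) : ℝ :=
  (intV μ fun x => |u x| ^ q) ^ (1 / q)

/-- The `L^∞(V)` norm `sup_x |u(x)|`. -/
noncomputable def LinfNorm (u : V → ℝ) : ℝ := ⨆ x, |u x|

/-- `g` (viewed via the pairing `u ↦ ∫ g u dμ`) belongs to the dual `ℋ'` of `ℋ`. -/
def memHdual (w : V → V → ℝ) (μ h g : V → ℝ) : Prop :=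
  ∃ C : ℝ, ∀ u : V → ℝ, memH w μ h u →
    Summable (fun x => μ x * (g x * u x)) ∧
    |intV μ fun x => g x * u x| ≤ C * normH w μ h u

/-- `u ∈ ℋ` is a weak solution of `−Δu + hu = f(x,u)`. -/
def weakSol (w : V → V → ℝ) (μ h : V → ℝ) (f : V → ℝ → ℝ) (u : V → ℝ) : Prop :=
  memH w μ h u ∧ ∀ φ : V → ℝ, memH w μ h φ →
    intV μ (fun x => gamma w μ u φ x + h x * u x * φ x) =
      intV μ (fun x => f x (u x) * φ x)

/-- `u ∈ ℋ` is a weak solution of the perturbed equation `−Δu + hu = f(x,u) + εg`. -/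
def weakSolP (w : V → V → ℝ) (μ h : V → ℝ) (f : V → ℝ → ℝ) (g : V → ℝ) (ε : ℝ)
    (u : V → ℝ) : Prop :=
  memH w μ h u ∧ ∀ φ : V → ℝ, memH w μ h φ →
    intV μ (fun x => gamma w μ u φ x + h x * u x * φ x) =
      intV μ (fun x => f x (u x) * φ x) + ε * intV μ (fun x => g x * φ x)

/-- The simple graph underlying the weights `w` (edges where the weight is nonzero). -/
def adjGraph (w : V → V → ℝ) : SimpleGraph V where
  Adj x y := x ≠ y ∧ (w x y ≠ 0 ∨ w y x ≠ 0)
  symm := ⟨fun x y hxy => ⟨hxy.1.symm, hxy.2.symm⟩⟩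
  loopless := ⟨fun x hx => hx.1 rfl⟩



section PSAux

variable {V : Type*}

private lemma sqrt_mul_sqrt_le_half {a b : ℝ} (ha : 0 ≤ a) (hb : 0 ≤ b) :
    Real.sqrt a * Real.sqrt b ≤ (a + b) / 2 := by
  nlinarith [Real.sq_sqrt ha, Real.sq_sqrt hb, sq_nonneg (Real.sqrt a - Real.sqrt b)]

private lemma two_term_CS {p q r s : ℝ} (hp : 0 ≤ p) (hq : 0 ≤ q) (hr : 0 ≤ r) (hs : 0 ≤ s) :
    Real.sqrt p * Real.sqrt r + Real.sqrt q * Real.sqrt s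
      ≤ Real.sqrt (p + q) * Real.sqrt (r + s) := by
  rw [show Real.sqrt (p + q) * Real.sqrt (r + s) = Real.sqrt ((p + q) * (r + s)) from
    (Real.sqrt_mul (by linarith) _).symm]
  refine Real.le_sqrt_of_sq_le ?_
  nlinarith [Real.sq_sqrt hp, Real.sq_sqrt hq, Real.sq_sqrt hr, Real.sq_sqrt hs,
    sq_nonneg (Real.sqrt p * Real.sqrt s - Real.sqrt q * Real.sqrt r),
    Real.sqrt_nonneg p, Real.sqrt_nonneg q, Real.sqrt_nonneg r, Real.sqrt_nonneg s,
    mul_nonneg (mul_nonneg (Real.sqrt_nonneg p) (Real.sqrt_nonneg q)) (mul_nonneg (Real.sqrt_nonneg r) (Real.sqrt_nonneg s))]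

private lemma abs_tsum_le {ι : Type*} {f : ι → ℝ} (hf : Summable fun x => |f x|) :
    |∑' x, f x| ≤ ∑' x, |f x| := by
  have := norm_tsum_le_tsum_norm (f := f) (by simpa [Real.norm_eq_abs] using hf)
  simpa [Real.norm_eq_abs] using this

private lemma tsum_sqrt_CS {ι : Type*} {a b : ι → ℝ} (ha0 : ∀ x, 0 ≤ a x) (hb0 : ∀ x, 0 ≤ b x)
    (ha : Summable a) (hb : Summable b) :
    ∑' x, Real.sqrt (a x) * Real.sqrt (b x) ≤ Real.sqrt (∑' x, a x) * Real.sqrt (∑' x, b x) := by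
  have hs : Summable fun x => Real.sqrt (a x) * Real.sqrt (b x) :=
    Summable.of_nonneg_of_le (fun x => by positivity)
      (fun x => sqrt_mul_sqrt_le_half (ha0 x) (hb0 x)) ((ha.add hb).div_const 2)
  refine Summable.tsum_le_of_sum_le hs fun s => ?_
  calc ∑ x ∈ s, Real.sqrt (a x) * Real.sqrt (b x)
      ≤ Real.sqrt (∑ x ∈ s, a x) * Real.sqrt (∑ x ∈ s, b x) :=
        Real.sum_sqrt_mul_sqrt_le s (fun i => ha0 i) (fun i => hb0 i)
    _ ≤ Real.sqrt (∑' x, a x) * Real.sqrt (∑' x, b x) := by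
        have h1 := Real.sqrt_le_sqrt (Summable.sum_le_tsum s (fun i _ => ha0 i) ha)
        have h2 := Real.sqrt_le_sqrt (Summable.sum_le_tsum s (fun i _ => hb0 i) hb)
        exact mul_le_mul h1 h2 (Real.sqrt_nonneg _) (Real.sqrt_nonneg _)

private lemma bound_of_tendsto {a : ℕ → ℝ} {c : ℝ} (h : Tendsto a atTop (nhds c)) :
    ∃ C : ℝ, 0 ≤ C ∧ ∀ k, |a k| ≤ C := by
  obtain ⟨N, hN⟩ := Metric.tendsto_atTop.mp h 1 one_pos
  refine ⟨|c| + 1 + ∑ i ∈ Finset.range N, |a i|, by positivity, fun k => ?_⟩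
  have hsum : (0:ℝ) ≤ ∑ i ∈ Finset.range N, |a i| := Finset.sum_nonneg fun i _ => abs_nonneg _
  rcases lt_or_ge k N with hk | hk
  · have h1 : |a k| ≤ ∑ i ∈ Finset.range N, |a i| :=
      Finset.single_le_sum (fun i _ => abs_nonneg (a i)) (Finset.mem_range.mpr hk)
    have h2 : (0:ℝ) ≤ |c| + 1 := by positivity
    linarith
  · have h1 := hN k hk
    rw [Real.dist_eq] at h1
    have h2 := abs_sub_abs_le_abs_sub (a k) c
    linarith

/-- `eH` is the summand of the squared `ℋ`-norm. -/
private noncomputable def eH (w : V → V → ℝ) (μ h : V → ℝ) (u : V → ℝ) (x : V) : ℝ :=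
  μ x * (gradSq w μ u x + h x * u x ^ 2)

/-- `qH` is the summand of the `ℋ` inner product. -/
private noncomputable def qH (w : V → V → ℝ) (μ h : V → ℝ) (u v : V → ℝ) (x : V) : ℝ :=
  μ x * (gamma w μ u v x + h x * u x * v x)

private lemma tsum_eq_finsum {w : V → V → ℝ} (hlf : ∀ x : V, {y | w x y ≠ 0}.Finite)
    (x : V) (G : V → ℝ) :
    ∑' y, w x y * G y = ∑ y ∈ (hlf x).toFinset, w x y * G y := by
  refine tsum_eq_sum fun y hy => ?_
  have hw : w x y = 0 := by
    by_contra hcon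
    exact hy ((hlf x).mem_toFinset.mpr hcon)
  simp [hw]

private lemma gradSq_fin {w : V → V → ℝ} (hlf : ∀ x : V, {y | w x y ≠ 0}.Finite)
    (μ u : V → ℝ) (x : V) :
    gradSq w μ u x = (1 / (2 * μ x)) * ∑ y ∈ (hlf x).toFinset, w x y * (u y - u x) ^ 2 := by
  unfold gradSq
  rw [tsum_eq_finsum hlf x (fun y => (u y - u x) ^ 2)]

private lemma gamma_fin {w : V → V → ℝ} (hlf : ∀ x : V, {y | w x y ≠ 0}.Finite)
    (μ u v : V → ℝ) (x : V) :
    gamma w μ u v x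
      = (1 / (2 * μ x)) * ∑ y ∈ (hlf x).toFinset, w x y * ((u y - u x) * (v y - v x)) := by
  unfold gamma
  rw [tsum_congr (fun y => by ring :
      ∀ y, w x y * (u y - u x) * (v y - v x) = w x y * ((u y - u x) * (v y - v x))),
    tsum_eq_finsum hlf x (fun y => (u y - u x) * (v y - v x))]

private lemma e_fin {w : V → V → ℝ} (hlf : ∀ x : V, {y | w x y ≠ 0}.Finite)
    (μ h u : V → ℝ) (x : V) :
    eH w μ h u x
      = μ x * ((1 / (2 * μ x)) * ∑ y ∈ (hlf x).toFinset, w x y * (u y - u x) ^ 2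
          + h x * u x ^ 2) := by
  rw [eH, gradSq_fin hlf]

private lemma q_fin {w : V → V → ℝ} (hlf : ∀ x : V, {y | w x y ≠ 0}.Finite)
    (μ h u v : V → ℝ) (x : V) :
    qH w μ h u v x
      = μ x * ((1 / (2 * μ x)) * ∑ y ∈ (hlf x).toFinset, w x y * ((u y - u x) * (v y - v x))
          + h x * u x * v x) := by
  rw [qH, gamma_fin hlf]

private lemma gradSq_nonneg {w : V → V → ℝ} (hwnn : ∀ x y, 0 ≤ w x y) {μ : V → ℝ}
    (hμpos : ∀ x, 0 < μ x) (u : V → ℝ) (x : V) : 0 ≤ gradSq w μ u x := by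
  unfold gradSq
  have h1 : (0:ℝ) ≤ 1 / (2 * μ x) := by
    have := hμpos x; positivity
  exact mul_nonneg h1 (tsum_nonneg fun y => mul_nonneg (hwnn x y) (sq_nonneg _))

private lemma eH_nonneg {w : V → V → ℝ} (hwnn : ∀ x y, 0 ≤ w x y) {μ h : V → ℝ}
    (hμpos : ∀ x, 0 < μ x) (hhpos : ∀ x, 0 < h x) (u : V → ℝ) (x : V) :
    0 ≤ eH w μ h u x := by
  have h1 := gradSq_nonneg hwnn hμpos u x
  have h2 := (hhpos x).le
  have h3 := (hμpos x).le
  have h4 : 0 ≤ h x * u x ^ 2 := mul_nonneg h2 (sq_nonneg _)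
  exact mul_nonneg h3 (by linarith)

private lemma mu_h_sq_le_e {w : V → V → ℝ} (hwnn : ∀ x y, 0 ≤ w x y) {μ h : V → ℝ}
    (hμpos : ∀ x, 0 < μ x) (u : V → ℝ) (x : V) :
    μ x * (h x * u x ^ 2) ≤ eH w μ h u x := by
  have h1 := mul_nonneg (hμpos x).le (gradSq_nonneg hwnn hμpos u x)
  simp only [eH]
  nlinarith [h1]

private lemma qH_self (w : V → V → ℝ) (μ h u : V → ℝ) (x : V) :
    qH w μ h u u x = eH w μ h u x := by
  have hg : gamma w μ u u x = gradSq w μ u x := by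
    unfold gamma gradSq
    congr 1
    exact tsum_congr fun y => by ring
  rw [qH, eH, hg]
  ring

private lemma memH_summable_e {w : V → V → ℝ} {μ h u : V → ℝ} (hu : memH w μ h u) :
    Summable (eH w μ h u) :=
  (hu.1.add hu.2).congr fun x => by simp only [eH]; ring

private lemma memH_of_summable_e {w : V → V → ℝ} (hwnn : ∀ x y, 0 ≤ w x y) {μ h : V → ℝ}
    (hμpos : ∀ x, 0 < μ x) (hhpos : ∀ x, 0 < h x) {u : V → ℝ}
    (hs : Summable (eH w μ h u)) : memH w μ h u := by
  constructor
  · refine Summable.of_nonneg_of_le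
      (fun x => mul_nonneg (hμpos x).le (gradSq_nonneg hwnn hμpos u x)) (fun x => ?_) hs
    have h4 : 0 ≤ μ x * (h x * u x ^ 2) :=
      mul_nonneg (hμpos x).le (mul_nonneg (hhpos x).le (sq_nonneg _))
    simp only [eH]; nlinarith [h4]
  · refine Summable.of_nonneg_of_le
      (fun x => mul_nonneg (hμpos x).le (mul_nonneg (hhpos x).le (sq_nonneg _)))
      (fun x => mu_h_sq_le_e hwnn hμpos u x) hs

private lemma gamma_sub {w : V → V → ℝ} (hlf : ∀ x : V, {y | w x y ≠ 0}.Finite)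
    (μ : V → ℝ) (a b c d : V → ℝ) (hd : ∀ y, d y = a y - b y) (x : V) :
    gamma w μ a c x - gamma w μ b c x = gamma w μ d c x := by
  rw [gamma_fin hlf μ a c x, gamma_fin hlf μ b c x, gamma_fin hlf μ d c x, ← mul_sub,
    ← Finset.sum_sub_distrib]
  refine congrArg _ (Finset.sum_congr rfl fun y _ => ?_)
  rw [hd y, hd x]; ring

private lemma qH_sub {w : V → V → ℝ} (hlf : ∀ x : V, {y | w x y ≠ 0}.Finite)
    (μ h : V → ℝ) (a b c d : V → ℝ) (hd : ∀ y, d y = a y - b y) (x : V) :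
    qH w μ h a c x - qH w μ h b c x = qH w μ h d c x := by
  have hg := gamma_sub hlf μ a b c d hd x
  simp only [qH]
  rw [hd x]
  linear_combination μ x * hg

private lemma e_sub_le {w : V → V → ℝ} (hwnn : ∀ x y, 0 ≤ w x y)
    (hlf : ∀ x : V, {y | w x y ≠ 0}.Finite) {μ h : V → ℝ}
    (hμpos : ∀ x, 0 < μ x) (hhpos : ∀ x, 0 < h x) (a b d : V → ℝ)
    (hd : ∀ y, d y = a y - b y) (x : V) :
    eH w μ h d x ≤ 2 * eH w μ h a x + 2 * eH w μ h b x := by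
  rw [e_fin hlf μ h d x, e_fin hlf μ h a x, e_fin hlf μ h b x]
  have hc : (0:ℝ) ≤ 1 / (2 * μ x) := by have := hμpos x; positivity
  have hsum : ∑ y ∈ (hlf x).toFinset, w x y * (d y - d x) ^ 2
      ≤ 2 * (∑ y ∈ (hlf x).toFinset, w x y * (a y - a x) ^ 2)
        + 2 * (∑ y ∈ (hlf x).toFinset, w x y * (b y - b x) ^ 2) := by
    rw [Finset.mul_sum, Finset.mul_sum, ← Finset.sum_add_distrib]
    refine Finset.sum_le_sum fun y _ => ?_
    rw [hd y, hd x]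
    nlinarith [mul_nonneg (hwnn x y) (sq_nonneg ((a y - a x) + (b y - b x)))]
  have k1 : (μ x * (1 / (2 * μ x))) * (∑ y ∈ (hlf x).toFinset, w x y * (d y - d x) ^ 2)
      ≤ (μ x * (1 / (2 * μ x))) * (2 * (∑ y ∈ (hlf x).toFinset, w x y * (a y - a x) ^ 2)
        + 2 * (∑ y ∈ (hlf x).toFinset, w x y * (b y - b x) ^ 2)) :=
    mul_le_mul_of_nonneg_left hsum (mul_nonneg (hμpos x).le hc)
  have k2 : h x * d x ^ 2 ≤ 2 * (h x * a x ^ 2) + 2 * (h x * b x ^ 2) := by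
    rw [hd x]
    nlinarith [mul_nonneg (hhpos x).le (sq_nonneg (a x + b x))]
  have k3 : μ x * (h x * d x ^ 2) ≤ μ x * (2 * (h x * a x ^ 2) + 2 * (h x * b x ^ 2)) :=
    mul_le_mul_of_nonneg_left k2 (hμpos x).le
  nlinarith [k1, k3]

private lemma qH_CS {w : V → V → ℝ} (hwnn : ∀ x y, 0 ≤ w x y)
    (hlf : ∀ x : V, {y | w x y ≠ 0}.Finite) {μ h : V → ℝ}
    (hμpos : ∀ x, 0 < μ x) (hhpos : ∀ x, 0 < h x) (u v : V → ℝ) (x : V) :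
    |qH w μ h u v x| ≤ Real.sqrt (eH w μ h u x) * Real.sqrt (eH w μ h v x) := by
  classical
  have hμne : μ x ≠ 0 := ne_of_gt (hμpos x)
  set S := (hlf x).toFinset with hS
  -- finite-sum Cauchy-Schwarz
  have hS1nn : (0:ℝ) ≤ ∑ y ∈ S, w x y * (u y - u x) ^ 2 :=
    Finset.sum_nonneg fun y _ => mul_nonneg (hwnn x y) (sq_nonneg _)
  have hS2nn : (0:ℝ) ≤ ∑ y ∈ S, w x y * (v y - v x) ^ 2 :=
    Finset.sum_nonneg fun y _ => mul_nonneg (hwnn x y) (sq_nonneg _)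
  have hCS : |∑ y ∈ S, w x y * ((u y - u x) * (v y - v x))|
      ≤ Real.sqrt (∑ y ∈ S, w x y * (u y - u x) ^ 2)
        * Real.sqrt (∑ y ∈ S, w x y * (v y - v x) ^ 2) := by
    have hposapp := Real.sum_mul_le_sqrt_mul_sqrt S
      (fun y => Real.sqrt (w x y) * (u y - u x)) (fun y => Real.sqrt (w x y) * (v y - v x))
    have hnegapp := Real.sum_mul_le_sqrt_mul_sqrt S
      (fun y => -(Real.sqrt (w x y) * (u y - u x))) (fun y => Real.sqrt (w x y) * (v y - v x))
    have e1 : ∑ y ∈ S, (Real.sqrt (w x y) * (u y - u x)) * (Real.sqrt (w x y) * (v y - v x))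
        = ∑ y ∈ S, w x y * ((u y - u x) * (v y - v x)) := by
      refine Finset.sum_congr rfl fun y _ => ?_
      have := Real.mul_self_sqrt (hwnn x y)
      calc (Real.sqrt (w x y) * (u y - u x)) * (Real.sqrt (w x y) * (v y - v x))
          = (Real.sqrt (w x y) * Real.sqrt (w x y)) * ((u y - u x) * (v y - v x)) := by ring
        _ = w x y * ((u y - u x) * (v y - v x)) := by rw [this]
    have e2 : ∑ y ∈ S, (Real.sqrt (w x y) * (u y - u x)) ^ 2
        = ∑ y ∈ S, w x y * (u y - u x) ^ 2 := by
      refine Finset.sum_congr rfl fun y _ => ?_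
      rw [mul_pow, Real.sq_sqrt (hwnn x y)]
    have e3 : ∑ y ∈ S, (Real.sqrt (w x y) * (v y - v x)) ^ 2
        = ∑ y ∈ S, w x y * (v y - v x) ^ 2 := by
      refine Finset.sum_congr rfl fun y _ => ?_
      rw [mul_pow, Real.sq_sqrt (hwnn x y)]
    have e2' : ∑ y ∈ S, (-(Real.sqrt (w x y) * (u y - u x))) ^ 2
        = ∑ y ∈ S, w x y * (u y - u x) ^ 2 := by
      refine Finset.sum_congr rfl fun y _ => ?_
      rw [neg_pow, mul_pow, Real.sq_sqrt (hwnn x y)]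
      ring
    have e1' : ∑ y ∈ S, (-(Real.sqrt (w x y) * (u y - u x))) * (Real.sqrt (w x y) * (v y - v x))
        = -∑ y ∈ S, w x y * ((u y - u x) * (v y - v x)) := by
      rw [← Finset.sum_neg_distrib]
      refine Finset.sum_congr rfl fun y _ => ?_
      have hw := Real.mul_self_sqrt (hwnn x y)
      calc (-(Real.sqrt (w x y) * (u y - u x))) * (Real.sqrt (w x y) * (v y - v x))
          = -((Real.sqrt (w x y) * Real.sqrt (w x y)) * ((u y - u x) * (v y - v x))) := by ring
        _ = -(w x y * ((u y - u x) * (v y - v x))) := by rw [hw]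
    rw [e1, e2, e3] at hposapp
    rw [e1', e2', e3] at hnegapp
    exact abs_le.mpr ⟨by linarith, hposapp⟩
  have hgam : μ x * gamma w μ u v x
      = (1 / 2) * ∑ y ∈ S, w x y * ((u y - u x) * (v y - v x)) := by
    rw [gamma_fin hlf μ u v x, ← hS, ← mul_assoc]
    congr 1
    field_simp
  have hA : μ x * gradSq w μ u x = (1 / 2) * ∑ y ∈ S, w x y * (u y - u x) ^ 2 := by
    rw [gradSq_fin hlf μ u x, ← hS, ← mul_assoc]
    congr 1
    field_simp
  have hB : μ x * gradSq w μ v x = (1 / 2) * ∑ y ∈ S, w x y * (v y - v x) ^ 2 := by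
    rw [gradSq_fin hlf μ v x, ← hS, ← mul_assoc]
    congr 1
    field_simp
  have hhalf : (1:ℝ)/2 * |∑ y ∈ S, w x y * ((u y - u x) * (v y - v x))|
      ≤ Real.sqrt (μ x * gradSq w μ u x) * Real.sqrt (μ x * gradSq w μ v x) := by
    rw [hA, hB, Real.sqrt_mul (by norm_num : (0:ℝ) ≤ 1/2),
      Real.sqrt_mul (by norm_num : (0:ℝ) ≤ 1/2)]
    have hq : Real.sqrt ((1:ℝ)/2) * Real.sqrt ((1:ℝ)/2) = 1/2 :=
      Real.mul_self_sqrt (by norm_num)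
    have : Real.sqrt ((1:ℝ)/2) * Real.sqrt (∑ y ∈ S, w x y * (u y - u x) ^ 2)
        * (Real.sqrt ((1:ℝ)/2) * Real.sqrt (∑ y ∈ S, w x y * (v y - v x) ^ 2))
        = (Real.sqrt ((1:ℝ)/2) * Real.sqrt ((1:ℝ)/2))
          * (Real.sqrt (∑ y ∈ S, w x y * (u y - u x) ^ 2)
            * Real.sqrt (∑ y ∈ S, w x y * (v y - v x) ^ 2)) := by ring
    rw [this, hq]
    linarith [hCS]
  have habs2 : |μ x * (h x * u x * v x)|
      = Real.sqrt (μ x * (h x * u x ^ 2)) * Real.sqrt (μ x * (h x * v x ^ 2)) := by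
    rw [← Real.sqrt_mul (by have := hμpos x; have := hhpos x; positivity)]
    have he : μ x * (h x * u x ^ 2) * (μ x * (h x * v x ^ 2))
        = (μ x * (h x * u x * v x)) ^ 2 := by ring
    rw [he, Real.sqrt_sq_eq_abs]
  have hq1 : qH w μ h u v x = μ x * gamma w μ u v x + μ x * (h x * u x * v x) := by
    rw [qH]; ring
  have step1 : |qH w μ h u v x|
      ≤ Real.sqrt (μ x * gradSq w μ u x) * Real.sqrt (μ x * gradSq w μ v x)
        + Real.sqrt (μ x * (h x * u x ^ 2)) * Real.sqrt (μ x * (h x * v x ^ 2)) := by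
    rw [hq1]
    refine (abs_add_le _ _).trans ?_
    have habs1 : |μ x * gamma w μ u v x|
        = (1:ℝ)/2 * |∑ y ∈ S, w x y * ((u y - u x) * (v y - v x))| := by
      rw [hgam, abs_mul]
      norm_num
    rw [habs1, habs2]
    linarith [hhalf]
  have hgu : 0 ≤ μ x * gradSq w μ u x := mul_nonneg (hμpos x).le (gradSq_nonneg hwnn hμpos u x)
  have hgv : 0 ≤ μ x * gradSq w μ v x := mul_nonneg (hμpos x).le (gradSq_nonneg hwnn hμpos v x)
  have hhu : 0 ≤ μ x * (h x * u x ^ 2) :=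
    mul_nonneg (hμpos x).le (mul_nonneg (hhpos x).le (sq_nonneg _))
  have hhv : 0 ≤ μ x * (h x * v x ^ 2) :=
    mul_nonneg (hμpos x).le (mul_nonneg (hhpos x).le (sq_nonneg _))
  have step2 := two_term_CS hgu hhu hgv hhv
  have heu : μ x * gradSq w μ u x + μ x * (h x * u x ^ 2) = eH w μ h u x := by
    rw [eH]; ring
  have hev : μ x * gradSq w μ v x + μ x * (h x * v x ^ 2) = eH w μ h v x := by
    rw [eH]; ring
  rw [heu, hev] at step2
  linarith [step1, step2]

private lemma qH_abs_summable {w : V → V → ℝ} (hwnn : ∀ x y, 0 ≤ w x y)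
    (hlf : ∀ x : V, {y | w x y ≠ 0}.Finite) {μ h : V → ℝ}
    (hμpos : ∀ x, 0 < μ x) (hhpos : ∀ x, 0 < h x) {u v : V → ℝ}
    (hu : Summable (eH w μ h u)) (hv : Summable (eH w μ h v)) :
    Summable fun x => |qH w μ h u v x| :=
  Summable.of_nonneg_of_le (fun x => abs_nonneg _)
    (fun x => (qH_CS hwnn hlf hμpos hhpos u v x).trans
      (sqrt_mul_sqrt_le_half (eH_nonneg hwnn hμpos hhpos u x) (eH_nonneg hwnn hμpos hhpos v x)))
    ((hu.add hv).div_const 2)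

private lemma e_tendsto {w : V → V → ℝ} (hlf : ∀ x : V, {y | w x y ≠ 0}.Finite)
    {μ h : V → ℝ} {a : ℕ → V → ℝ} {u : V → ℝ}
    (hpt : ∀ y, Tendsto (fun j => a j y) atTop (nhds (u y))) (x : V) :
    Tendsto (fun j => eH w μ h (a j) x) atTop (nhds (eH w μ h u x)) := by
  simp only [e_fin hlf]
  refine Tendsto.const_mul _ (Tendsto.add ?_ ?_)
  · exact Tendsto.const_mul _ (tendsto_finset_sum _ fun y _ =>
      Tendsto.const_mul _ (((hpt y).sub (hpt x)).pow 2))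
  · exact Tendsto.const_mul _ ((hpt x).pow 2)

private lemma q_tendsto {w : V → V → ℝ} (hlf : ∀ x : V, {y | w x y ≠ 0}.Finite)
    {μ h : V → ℝ} (u : V → ℝ) {cs : ℕ → V → ℝ}
    (hc : ∀ y, Tendsto (fun j => cs j y) atTop (nhds 0)) (x : V) :
    Tendsto (fun j => qH w μ h u (cs j) x) atTop (nhds 0) := by
  have key : Tendsto (fun j => qH w μ h u (cs j) x) atTop
      (nhds (μ x * ((1 / (2 * μ x)) * ∑ y ∈ (hlf x).toFinset,
        w x y * ((u y - u x) * ((0:ℝ) - 0)) + h x * u x * 0))) := by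
    simp only [q_fin hlf]
    refine Tendsto.const_mul _ (Tendsto.add ?_ ?_)
    · exact Tendsto.const_mul _ (tendsto_finset_sum _ fun y _ =>
        Tendsto.const_mul _ (Tendsto.const_mul _ ((hc y).sub (hc x))))
    · exact Tendsto.const_mul _ (hc x)
  simpa using key

private lemma abs_fv_le {μ h : V → ℝ} (hμpos : ∀ x, 0 < μ x) (hhpos : ∀ x, 0 < h x)
    {A' : ℝ} (hA' : 0 ≤ A') {fv vx : ℝ} (hf0 : 0 ≤ fv) (hfA : fv ≤ A') (x : V) :
    |μ x * (fv * vx)| ≤ Real.sqrt (A' ^ 2 * (μ x * (1 / h x)))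
      * Real.sqrt (μ x * (h x * vx ^ 2)) := by
  have h2 : Real.sqrt (A' ^ 2 * (μ x * (1 / h x))) = A' * Real.sqrt (μ x * (1 / h x)) := by
    rw [Real.sqrt_mul (sq_nonneg A'), Real.sqrt_sq hA']
  have h3 : Real.sqrt (μ x * (1 / h x)) * Real.sqrt (μ x * (h x * vx ^ 2)) = μ x * |vx| := by
    rw [← Real.sqrt_mul (by have := hμpos x; have := hhpos x; positivity)]
    have he : μ x * (1 / h x) * (μ x * (h x * vx ^ 2)) = (μ x * vx) ^ 2 := by
      have hne : h x ≠ 0 := ne_of_gt (hhpos x)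
      field_simp
    rw [he, Real.sqrt_sq_eq_abs, abs_mul, abs_of_pos (hμpos x)]
  have h1 : |μ x * (fv * vx)| = μ x * fv * |vx| := by
    rw [abs_mul, abs_mul, abs_of_pos (hμpos x), abs_of_nonneg hf0, mul_assoc]
  have hRHS : Real.sqrt (A' ^ 2 * (μ x * (1 / h x))) * Real.sqrt (μ x * (h x * vx ^ 2))
      = A' * (μ x * |vx|) := by
    rw [h2, mul_assoc, h3]
  rw [h1, hRHS]
  have h4 : μ x * fv * |vx| ≤ μ x * A' * |vx| :=
    mul_le_mul_of_nonneg_right (mul_le_mul_of_nonneg_left hfA (hμpos x).le) (abs_nonneg _)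
  calc μ x * fv * |vx| ≤ μ x * A' * |vx| := h4
    _ = A' * (μ x * |vx|) := by ring

private lemma tendsto_tsum_zero {c : ℕ → V → ℝ} {d : V → ℝ} {g : ℕ → V → ℝ} {K : ℝ}
    (hd0 : ∀ x, 0 ≤ d x) (hd : Summable d)
    (hg0 : ∀ j x, 0 ≤ g j x) (hg : ∀ j, Summable (g j)) (hK : 0 ≤ K)
    (hgB : ∀ j, ∑' x, g j x ≤ K ^ 2)
    (hcb : ∀ j x, |c j x| ≤ Real.sqrt (d x) * Real.sqrt (g j x))
    (hc0 : ∀ x, Tendsto (fun j => c j x) atTop (nhds 0)) :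
    Tendsto (fun j => ∑' x, c j x) atTop (nhds 0) := by
  classical
  have hcabs : ∀ j, Summable fun x => |c j x| := fun j =>
    Summable.of_nonneg_of_le (fun x => abs_nonneg _)
      (fun x => (hcb j x).trans (sqrt_mul_sqrt_le_half (hd0 x) (hg0 j x)))
      ((hd.add (hg j)).div_const 2)
  have hcs : ∀ j, Summable (c j) := fun j => (hcabs j).of_abs
  rw [Metric.tendsto_atTop]
  intro ε hε
  have hK1 : (0:ℝ) < K + 1 := by linarith
  have hδpos : (0:ℝ) < (ε / (2 * (K + 1))) ^ 2 := by positivity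
  obtain ⟨s, hs⟩ : ∃ s : Finset V,
      (∑' x, d x) - (ε / (2 * (K + 1))) ^ 2 < ∑ x ∈ s, d x := by
    have hlt : (∑' x, d x) - (ε / (2 * (K + 1))) ^ 2 < ∑' x, d x := by linarith
    exact (hd.hasSum.eventually (Ioi_mem_nhds hlt)).exists
  have htail_d : ∑' (x : ↑((↑s : Set V)ᶜ)), d ↑x < (ε / (2 * (K + 1))) ^ 2 := by
    have hsplit := Summable.sum_add_tsum_compl (s := s) hd
    linarith
  have htail : ∀ j, |∑' (x : ↑((↑s : Set V)ᶜ)), c j ↑x| ≤ ε / 2 := by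
    intro j
    have hsub_abs : Summable fun x : ↑((↑s : Set V)ᶜ) => |c j ↑x| := (hcabs j).subtype _
    have h1 : |∑' (x : ↑((↑s : Set V)ᶜ)), c j ↑x| ≤ ∑' (x : ↑((↑s : Set V)ᶜ)), |c j ↑x| :=
      abs_tsum_le hsub_abs
    have hsqsub : Summable fun x : ↑((↑s : Set V)ᶜ) => Real.sqrt (d ↑x) * Real.sqrt (g j ↑x) :=
      Summable.of_nonneg_of_le (fun x => by positivity)
        (fun x => sqrt_mul_sqrt_le_half (hd0 ↑x) (hg0 j ↑x))
        (((hd.subtype _).add ((hg j).subtype _)).div_const 2)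
    have h2 : ∑' (x : ↑((↑s : Set V)ᶜ)), |c j ↑x|
        ≤ ∑' (x : ↑((↑s : Set V)ᶜ)), Real.sqrt (d ↑x) * Real.sqrt (g j ↑x) :=
      Summable.tsum_le_tsum (fun x => hcb j ↑x) hsub_abs hsqsub
    have h3 : ∑' (x : ↑((↑s : Set V)ᶜ)), Real.sqrt (d ↑x) * Real.sqrt (g j ↑x)
        ≤ Real.sqrt (∑' (x : ↑((↑s : Set V)ᶜ)), d ↑x)
          * Real.sqrt (∑' (x : ↑((↑s : Set V)ᶜ)), g j ↑x) :=
      tsum_sqrt_CS (fun x => hd0 ↑x) (fun x => hg0 j ↑x) (hd.subtype _) ((hg j).subtype _)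
    have hgtail : ∑' (x : ↑((↑s : Set V)ᶜ)), g j ↑x ≤ K ^ 2 := by
      have hsplit := Summable.sum_add_tsum_compl (s := s) (hg j)
      have hhead : (0:ℝ) ≤ ∑ x ∈ s, g j x := Finset.sum_nonneg fun x _ => hg0 j x
      linarith [hgB j]
    have h4 : Real.sqrt (∑' (x : ↑((↑s : Set V)ᶜ)), d ↑x) ≤ ε / (2 * (K + 1)) := by
      have := Real.sqrt_le_sqrt htail_d.le
      rwa [Real.sqrt_sq (by positivity)] at this
    have h5 : Real.sqrt (∑' (x : ↑((↑s : Set V)ᶜ)), g j ↑x) ≤ K := by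
      have := Real.sqrt_le_sqrt hgtail
      rwa [Real.sqrt_sq hK] at this
    have h6 : Real.sqrt (∑' (x : ↑((↑s : Set V)ᶜ)), d ↑x)
        * Real.sqrt (∑' (x : ↑((↑s : Set V)ᶜ)), g j ↑x) ≤ (ε / (2 * (K + 1))) * K :=
      mul_le_mul h4 h5 (Real.sqrt_nonneg _) (by positivity)
    have h7 : (ε / (2 * (K + 1))) * K ≤ ε / 2 := by
      rw [div_mul_eq_mul_div, div_le_div_iff₀ (by linarith) (by norm_num)]
      nlinarith
    linarith
  have hhead : Tendsto (fun j => ∑ x ∈ s, c j x) atTop (nhds 0) := by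
    have := tendsto_finset_sum s (fun x (_ : x ∈ s) => hc0 x)
    simpa using this
  obtain ⟨N, hN⟩ := Metric.tendsto_atTop.mp hhead (ε / 2) (by positivity)
  refine ⟨N, fun j hj => ?_⟩
  have hsplit := Summable.sum_add_tsum_compl (s := s) (hcs j)
  have hNj := hN j hj
  rw [Real.dist_eq, sub_zero] at hNj ⊢
  calc |∑' x, c j x| = |(∑ x ∈ s, c j x) + ∑' (x : ↑((↑s : Set V)ᶜ)), c j ↑x| := by
        rw [hsplit]
    _ ≤ |∑ x ∈ s, c j x| + |∑' (x : ↑((↑s : Set V)ᶜ)), c j ↑x| := abs_add_le _ _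
    _ < ε / 2 + ε / 2 := by
        have := htail j
        linarith
    _ = ε := by ring

private lemma Fint_nonpos_eq_zero {f : V → ℝ → ℝ} (hfneg : ∀ x, ∀ s : ℝ, s ≤ 0 → f x s = 0)
    (x : V) {s : ℝ} (hs : s ≤ 0) : Fint f x s = 0 := by
  unfold Fint
  have heq : Set.EqOn (f x) (fun _ => (0:ℝ)) (Set.uIcc 0 s) := by
    intro t ht
    rw [Set.uIcc_of_ge hs] at ht
    exact hfneg x t ht.2
  rw [intervalIntegral.integral_congr heq]
  simp

end PSAux


set_option maxHeartbeats 2000000 in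
theorem palais_smale_condition
    (w : V → V → ℝ) (hsymm : ∀ x y, w x y = w y x) (hwnn : ∀ x y, 0 ≤ w x y)
    (hlf : ∀ x : V, {y | w x y ≠ 0}.Finite)
    (μ : V → ℝ) (μmin : ℝ) (hμmin : 0 < μmin) (hμ : ∀ x, μmin ≤ μ x)
    (h : V → ℝ) (h₀ : ℝ) (hh₀ : 0 < h₀) (hH1 : ∀ x, h₀ ≤ h x)
    (hH2 : Summable fun x => μ x * (1 / h x))
    (f : V → ℝ → ℝ)
    (hF1c : ∀ x, Continuous (f x)) (hF10 : ∀ x, f x 0 = 0)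
    (hF1b : ∀ M : ℝ, 0 < M → ∃ A : ℝ, ∀ x, ∀ s ∈ Set.Icc (0:ℝ) M, f x s ≤ A)
    (hF2 : ∃ θ : ℝ, 2 < θ ∧ ∀ x, ∀ s : ℝ, 0 < s →
      0 < θ * Fint f x s ∧ θ * Fint f x s ≤ s * f x s)
    (hfneg : ∀ x, ∀ s : ℝ, s ≤ 0 → f x s = 0) :
    ∀ c : ℝ, ∀ uk : ℕ → V → ℝ, (∀ k, memH w μ h (uk k)) →
      Tendsto (fun k => energy w μ h f (uk k)) atTop (nhds c) →
      (∃ εk : ℕ → ℝ, Tendsto εk atTop (nhds 0) ∧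
        ∀ k, ∀ φ : V → ℝ, memH w μ h φ →
          |innerH w μ h (uk k) φ - intV μ fun x => f x (uk k x) * φ x| ≤
            εk k * normH w μ h φ) →
      ∃ u : V → ℝ, memH w μ h u ∧ ∃ φ : ℕ → ℕ, StrictMono φ ∧
        Tendsto (fun j => normH w μ h fun x => uk (φ j) x - u x) atTop (nhds 0) := by
  classical
  intro c uk hmem hJ hPS
  obtain ⟨εk, hεk0, hεk⟩ := hPS
  obtain ⟨θ, hθ2, hθF2⟩ := hF2
  have hμpos : ∀ x, 0 < μ x := fun x => lt_of_lt_of_le hμmin (hμ x)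
  have hhpos : ∀ x, 0 < h x := fun x => lt_of_lt_of_le hh₀ (hH1 x)
  have hθpos : (0:ℝ) < θ := by linarith
  have hE0 : ∀ (u : V → ℝ) (x : V), 0 ≤ eH w μ h u x :=
    fun u x => eH_nonneg hwnn hμpos hhpos u x
  have hsumE : ∀ k, Summable (eH w μ h (uk k)) := fun k => memH_summable_e (hmem k)
  have htnn : ∀ k, (0:ℝ) ≤ ∑' x, eH w μ h (uk k) x := fun k => tsum_nonneg fun x => hE0 _ x
  -- facts about F
  have hFnn : ∀ x s, (0:ℝ) ≤ Fint f x s := by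
    intro x s
    rcases le_or_gt s 0 with hs | hs
    · rw [Fint_nonpos_eq_zero hfneg x hs]
    · nlinarith [(hθF2 x s hs).1]
  have hθFle : ∀ x s, θ * Fint f x s ≤ s * f x s := by
    intro x s
    rcases le_or_gt s 0 with hs | hs
    · rw [Fint_nonpos_eq_zero hfneg x hs, hfneg x s hs]
      simp
    · exact (hθF2 x s hs).2
  -- bounds on energies and perturbations
  obtain ⟨CJ, hCJ0, hCJ⟩ := bound_of_tendsto hJ
  obtain ⟨Cε, hCε0, hCε⟩ := bound_of_tendsto hεk0
  set a := θ / 2 - 1 with ha_def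
  have hapos : 0 < a := by rw [ha_def]; linarith
  set B := max 1 (max Cε ((θ * CJ + Cε) / a)) with hB_def
  have hB1 : (1:ℝ) ≤ B := by rw [hB_def]; exact le_max_left _ _
  have hBpos : (0:ℝ) < B := lt_of_lt_of_le one_pos hB1
  have hCεB : Cε ≤ B := by
    rw [hB_def]
    exact (le_max_left Cε _).trans (le_max_right 1 _)
  have hquotB : (θ * CJ + Cε) / a ≤ B := by
    rw [hB_def]
    exact (le_max_right Cε _).trans (le_max_right 1 _)
  -- STEP 1: boundedness
  have hBk : ∀ k, Real.sqrt (∑' x, eH w μ h (uk k) x) ≤ B := by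
    intro k
    have hn0 : 0 ≤ Real.sqrt (∑' x, eH w μ h (uk k) x) := Real.sqrt_nonneg _
    have hn2 : Real.sqrt (∑' x, eH w μ h (uk k) x) ^ 2 = ∑' x, eH w μ h (uk k) x :=
      Real.sq_sqrt (htnn k)
    have hPSk := hεk k (uk k) (hmem k)
    rw [show innerH w μ h (uk k) (uk k) = ∑' x, eH w μ h (uk k) x from
        tsum_congr fun x => qH_self w μ h (uk k) x,
      show (intV μ fun x => f x (uk k x) * uk k x)
          = ∑' x, μ x * (f x (uk k x) * uk k x) from rfl,
      show normH w μ h (uk k) = Real.sqrt (∑' x, eH w μ h (uk k) x) from rfl] at hPSk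
    have hkey : |(∑' x, eH w μ h (uk k) x) - ∑' x, μ x * (f x (uk k x) * uk k x)|
        ≤ Cε * Real.sqrt (∑' x, eH w μ h (uk k) x) :=
      hPSk.trans (mul_le_mul_of_nonneg_right ((le_abs_self _).trans (hCε k)) hn0)
    by_cases hPsum : Summable fun x => μ x * (f x (uk k x) * uk k x)
    · -- summable case
      have hμFle : ∀ x, μ x * Fint f x (uk k x)
          ≤ (1 / θ) * (μ x * (f x (uk k x) * uk k x)) := by
        intro x
        have h1 := hθFle x (uk k x)
        have h2 : Fint f x (uk k x) ≤ (f x (uk k x) * uk k x) / θ := by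
          rw [le_div_iff₀ hθpos]; linarith
        have h3 := mul_le_mul_of_nonneg_left h2 (hμpos x).le
        calc μ x * Fint f x (uk k x) ≤ μ x * ((f x (uk k x) * uk k x) / θ) := h3
          _ = (1 / θ) * (μ x * (f x (uk k x) * uk k x)) := by ring
      have hFsum : Summable fun x => μ x * Fint f x (uk k x) :=
        Summable.of_nonneg_of_le (fun x => mul_nonneg (hμpos x).le (hFnn x _)) hμFle
          (hPsum.mul_left (1 / θ))
      have hFle2 : ∑' x, μ x * Fint f x (uk k x)
          ≤ (1 / θ) * ∑' x, μ x * (f x (uk k x) * uk k x) := by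
        have := Summable.tsum_le_tsum hμFle hFsum (hPsum.mul_left (1 / θ))
        rwa [tsum_mul_left] at this
      have hJk := hCJ k
      rw [show energy w μ h f (uk k) = (1 / 2) * (∑' x, eH w μ h (uk k) x)
          - ∑' x, μ x * Fint f x (uk k x) from rfl] at hJk
      have h6 : θ * ∑' x, μ x * Fint f x (uk k x)
          ≤ ∑' x, μ x * (f x (uk k x) * uk k x) := by
        have h61 := mul_le_mul_of_nonneg_left hFle2 hθpos.le
        have h62 : θ * ((1 / θ) * ∑' x, μ x * (f x (uk k x) * uk k x))
            = ∑' x, μ x * (f x (uk k x) * uk k x) := by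
          field_simp
        linarith
      have h7 : (∑' x, μ x * (f x (uk k x) * uk k x))
          ≤ (∑' x, eH w μ h (uk k) x) + Cε * Real.sqrt (∑' x, eH w μ h (uk k) x) := by
        have := (abs_le.mp hkey).1
        linarith
      have h8 : (1 / 2) * (∑' x, eH w μ h (uk k) x) - (∑' x, μ x * Fint f x (uk k x)) ≤ CJ :=
        (abs_le.mp hJk).2
      have h9 : θ * ((1 / 2) * (∑' x, eH w μ h (uk k) x) - CJ)
          ≤ θ * ∑' x, μ x * Fint f x (uk k x) :=
        mul_le_mul_of_nonneg_left (by linarith) hθpos.le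
      have h10 : a * (∑' x, eH w μ h (uk k) x)
          ≤ θ * CJ + Cε * Real.sqrt (∑' x, eH w μ h (uk k) x) := by
        rw [ha_def]
        nlinarith [h9, h6, h7]
      rcases le_or_gt (Real.sqrt (∑' x, eH w μ h (uk k) x)) 1 with h11 | h11
      · exact h11.trans hB1
      · have hθCJ : (0:ℝ) ≤ θ * CJ := mul_nonneg hθpos.le hCJ0
        have h12 : a * Real.sqrt (∑' x, eH w μ h (uk k) x) ≤ θ * CJ + Cε := by
          nlinarith [h10, hn2, h11, hθCJ, hCε0, hapos]
        have h13 : Real.sqrt (∑' x, eH w μ h (uk k) x) ≤ (θ * CJ + Cε) / a :=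
          (le_div_iff₀ hapos).mpr (by linarith)
        exact h13.trans hquotB
    · -- non-summable case
      have hP0 : (∑' x, μ x * (f x (uk k x) * uk k x)) = 0 :=
        tsum_eq_zero_of_not_summable hPsum
      rw [hP0, sub_zero, abs_of_nonneg (htnn k)] at hkey
      rcases eq_or_lt_of_le hn0 with hn0' | hn0'
      · rw [← hn0']; exact hBpos.le
      · have : Real.sqrt (∑' x, eH w μ h (uk k) x) ≤ Cε := by
          nlinarith [hkey, hn2]
        exact this.trans hCεB
  have hTk : ∀ k, (∑' x, eH w μ h (uk k) x) ≤ B ^ 2 := by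
    intro k
    have := pow_le_pow_left₀ (Real.sqrt_nonneg _) (hBk k) 2
    rwa [Real.sq_sqrt (htnn k)] at this
  -- STEP 2: uniform sup bound
  have hMb : ∀ k x, |uk k x| ≤ Real.sqrt (B ^ 2 / (μmin * h₀)) := by
    intro k x
    have h1 : μ x * (h x * uk k x ^ 2) ≤ eH w μ h (uk k) x := mu_h_sq_le_e hwnn hμpos (uk k) x
    have h2 : eH w μ h (uk k) x ≤ ∑' y, eH w μ h (uk k) y :=
      Summable.le_tsum (hsumE k) x fun y _ => hE0 _ y
    have h3 := hTk k
    have s1 : μmin * (h₀ * uk k x ^ 2) ≤ μmin * (h x * uk k x ^ 2) :=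
      mul_le_mul_of_nonneg_left (mul_le_mul_of_nonneg_right (hH1 x) (sq_nonneg _)) hμmin.le
    have s2 : μmin * (h x * uk k x ^ 2) ≤ μ x * (h x * uk k x ^ 2) :=
      mul_le_mul_of_nonneg_right (hμ x) (mul_nonneg (hhpos x).le (sq_nonneg _))
    have h4 : uk k x ^ 2 ≤ B ^ 2 / (μmin * h₀) := by
      rw [le_div_iff₀ (by positivity)]
      nlinarith [s1, s2, h1, h2, h3]
    calc |uk k x| = Real.sqrt (uk k x ^ 2) := (Real.sqrt_sq_eq_abs _).symm
      _ ≤ Real.sqrt (B ^ 2 / (μmin * h₀)) := Real.sqrt_le_sqrt h4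
  set M := Real.sqrt (B ^ 2 / (μmin * h₀)) + 1 with hM_def
  have hMbnn : (0:ℝ) ≤ Real.sqrt (B ^ 2 / (μmin * h₀)) := Real.sqrt_nonneg _
  have hMpos : 0 < M := by rw [hM_def]; linarith
  obtain ⟨A, hA⟩ := hF1b M hMpos
  have hA'0 : (0:ℝ) ≤ max A 0 := le_max_right A 0
  have hfb : ∀ k x, 0 ≤ f x (uk k x) ∧ f x (uk k x) ≤ max A 0 := by
    intro k x
    rcases le_or_gt (uk k x) 0 with hs | hs
    · rw [hfneg x _ hs]
      exact ⟨le_refl 0, hA'0⟩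
    · have h1 := (hθF2 x _ hs).1
      have h2 := (hθF2 x _ hs).2
      constructor
      · nlinarith
      · refine (hA x _ ⟨hs.le, ?_⟩).trans (le_max_left A 0)
        have h3 := hMb k x
        have h4 := le_abs_self (uk k x)
        rw [hM_def]
        linarith
  -- STEP 3: countability and subsequence extraction
  have hcnt : Countable V := by
    have hsupp := hH2.countable_support
    have huniv : (Function.support fun x => μ x * (1 / h x)) = Set.univ :=
      Set.eq_univ_of_forall fun x => by
        have h1 := hμpos x
        have h2 := hhpos x
        exact ne_of_gt (by positivity)
    rw [huniv] at hsupp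
    exact Set.countable_univ_iff.mp hsupp
  haveI := hcnt
  have hcpt : IsCompact (Set.pi Set.univ fun _ : V => Set.Icc (-M) M) :=
    isCompact_univ_pi fun _ => isCompact_Icc
  have hmemK : ∀ k, uk k ∈ Set.pi Set.univ fun _ : V => Set.Icc (-M) M := by
    intro k
    rw [Set.mem_univ_pi]
    intro x
    have h1 := hMb k x
    have h2 : |uk k x| ≤ M := by rw [hM_def]; linarith
    exact abs_le.mp h2
  obtain ⟨u, humem, φ, hφ, hconv⟩ := hcpt.tendsto_subseq hmemK
  have hpt : ∀ x, Tendsto (fun j => uk (φ j) x) atTop (nhds (u x)) := fun x =>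
    tendsto_pi_nhds.mp hconv x
  -- STEP 4: limit lies in H
  have hEupt : ∀ x, Tendsto (fun j => eH w μ h (uk (φ j)) x) atTop (nhds (eH w μ h u x)) :=
    fun x => e_tendsto hlf (a := fun j => uk (φ j)) hpt x
  have hTbound : ∀ T : Finset V, (∑ x ∈ T, eH w μ h u x) ≤ B ^ 2 := by
    intro T
    have hlim : Tendsto (fun j => ∑ x ∈ T, eH w μ h (uk (φ j)) x) atTop
        (nhds (∑ x ∈ T, eH w μ h u x)) := tendsto_finset_sum T fun x _ => hEupt x
    refine le_of_tendsto hlim (Filter.Eventually.of_forall fun j => ?_)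
    exact (Summable.sum_le_tsum T (fun x _ => hE0 _ x) (hsumE (φ j))).trans (hTk (φ j))
  have hEusum : Summable (eH w μ h u) :=
    summable_of_sum_le (fun x => hE0 u x) hTbound
  have hEule : (∑' x, eH w μ h u x) ≤ B ^ 2 := Summable.tsum_le_of_sum_le hEusum hTbound
  have hmemHu : memH w μ h u := memH_of_summable_e hwnn hμpos hhpos hEusum
  -- STEP 5: strong convergence of the subsequence
  set v : ℕ → V → ℝ := fun j x => uk (φ j) x - u x with hv
  have hvd : ∀ j y, v j y = uk (φ j) y - u y := fun j y => by simp only [hv]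
  have hvpt : ∀ x, Tendsto (fun j => v j x) atTop (nhds 0) := by
    intro x
    have h1 := (hpt x).sub_const (u x)
    have h2 : u x - u x = 0 := sub_self _
    rw [h2] at h1
    exact h1.congr fun j => (hvd j x).symm
  have hEvle : ∀ j x, eH w μ h (v j) x
      ≤ 2 * eH w μ h (uk (φ j)) x + 2 * eH w μ h u x :=
    fun j x => e_sub_le hwnn hlf hμpos hhpos (uk (φ j)) u (v j) (hvd j) x
  have hEvsum : ∀ j, Summable (eH w μ h (v j)) := by
    intro j
    exact Summable.of_nonneg_of_le (fun x => hE0 _ x) (hEvle j)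
      (((hsumE (φ j)).mul_left 2).add (hEusum.mul_left 2))
  have hTv : ∀ j, (∑' x, eH w μ h (v j) x) ≤ (2 * B) ^ 2 := by
    intro j
    have h1 : (∑' x, eH w μ h (v j) x)
        ≤ ∑' x, (2 * eH w μ h (uk (φ j)) x + 2 * eH w μ h u x) :=
      Summable.tsum_le_tsum (hEvle j) (hEvsum j) (((hsumE (φ j)).mul_left 2).add (hEusum.mul_left 2))
    have h2 : (∑' x, (2 * eH w μ h (uk (φ j)) x + 2 * eH w μ h u x))
        = 2 * (∑' x, eH w μ h (uk (φ j)) x) + 2 * (∑' x, eH w μ h u x) := by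
      rw [Summable.tsum_add ((hsumE (φ j)).mul_left 2) (hEusum.mul_left 2), tsum_mul_left, tsum_mul_left]
    have h3 := hTk (φ j)
    have h4 : (2 * B) ^ 2 = 4 * B ^ 2 := by ring
    linarith [h1, h2, h3, h4, hEule]
  have hmemHv : ∀ j, memH w μ h (v j) := fun j =>
    memH_of_summable_e hwnn hμpos hhpos (hEvsum j)
  have hnormv : ∀ j, normH w μ h (v j) ≤ 2 * B := by
    intro j
    rw [show normH w μ h (v j) = Real.sqrt (∑' x, eH w μ h (v j) x) from rfl]
    have := Real.sqrt_le_sqrt (hTv j)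
    rwa [Real.sqrt_sq (by linarith : (0:ℝ) ≤ 2 * B)] at this
  -- identity T j = <u_kj, v j> - <u, v j>
  have hvsum_e : ∀ j, (∑' x, eH w μ h (v j) x)
      = (∑' x, qH w μ h (uk (φ j)) (v j) x) - ∑' x, qH w μ h u (v j) x := by
    intro j
    have hq1 : Summable fun x => qH w μ h (uk (φ j)) (v j) x :=
      (qH_abs_summable hwnn hlf hμpos hhpos (hsumE (φ j)) (hEvsum j)).of_abs
    have hq2 : Summable fun x => qH w μ h u (v j) x :=
      (qH_abs_summable hwnn hlf hμpos hhpos hEusum (hEvsum j)).of_abs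
    have hptw : ∀ x, eH w μ h (v j) x
        = qH w μ h (uk (φ j)) (v j) x - qH w μ h u (v j) x := by
      intro x
      rw [qH_sub hlf μ h (uk (φ j)) u (v j) (v j) (hvd j) x]
      exact (qH_self w μ h (v j) x).symm
    rw [tsum_congr hptw]
    exact Summable.tsum_sub hq1 hq2
  -- term 1
  have hX1 : ∀ j, |(∑' x, qH w μ h (uk (φ j)) (v j) x)
      - ∑' x, μ x * (f x (uk (φ j) x) * v j x)| ≤ |εk (φ j)| * (2 * B) := by
    intro j
    have hb := hεk (φ j) (v j) (hmemHv j)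
    rw [show innerH w μ h (uk (φ j)) (v j) = ∑' x, qH w μ h (uk (φ j)) (v j) x from rfl,
      show (intV μ fun x => f x (uk (φ j) x) * v j x)
        = ∑' x, μ x * (f x (uk (φ j) x) * v j x) from rfl] at hb
    have hnn : 0 ≤ normH w μ h (v j) := Real.sqrt_nonneg _
    have h1 : εk (φ j) * normH w μ h (v j) ≤ |εk (φ j)| * normH w μ h (v j) :=
      mul_le_mul_of_nonneg_right (le_abs_self _) hnn
    have h2 : |εk (φ j)| * normH w μ h (v j) ≤ |εk (φ j)| * (2 * B) :=
      mul_le_mul_of_nonneg_left (hnormv j) (abs_nonneg _)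
    linarith
  have hX1tends : Tendsto (fun j => |εk (φ j)| * (2 * B)) atTop (nhds 0) := by
    have h1 : Tendsto (fun j => εk (φ j)) atTop (nhds 0) := hεk0.comp hφ.tendsto_atTop
    have h2 := h1.abs.mul_const (2 * B)
    simpa using h2
  -- term 2
  have hX2 : Tendsto (fun j => ∑' x, μ x * (f x (uk (φ j) x) * v j x)) atTop (nhds 0) := by
    refine tendsto_tsum_zero (d := fun x => (max A 0) ^ 2 * (μ x * (1 / h x)))
      (g := fun j => eH w μ h (v j)) (K := 2 * B) ?_ ?_ (fun j x => hE0 _ x) hEvsum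
      (by linarith) hTv ?_ ?_
    · intro x
      have h1 := hμpos x
      have h2 := hhpos x
      positivity
    · exact hH2.mul_left _
    · intro j x
      have hf := hfb (φ j) x
      have h1 := abs_fv_le hμpos hhpos hA'0 hf.1 hf.2 (vx := v j x) x
      have h2 : μ x * (h x * v j x ^ 2) ≤ eH w μ h (v j) x := mu_h_sq_le_e hwnn hμpos (v j) x
      have h3 := Real.sqrt_le_sqrt h2
      calc |μ x * (f x (uk (φ j) x) * v j x)|
          ≤ Real.sqrt ((max A 0) ^ 2 * (μ x * (1 / h x)))
            * Real.sqrt (μ x * (h x * v j x ^ 2)) := h1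
        _ ≤ Real.sqrt ((max A 0) ^ 2 * (μ x * (1 / h x)))
            * Real.sqrt (eH w μ h (v j) x) :=
          mul_le_mul_of_nonneg_left h3 (Real.sqrt_nonneg _)
    · intro x
      have hball : ∀ j, |μ x * (f x (uk (φ j) x) * v j x)| ≤ μ x * (max A 0) * |v j x| := by
        intro j
        have hf := hfb (φ j) x
        rw [abs_mul, abs_mul, abs_of_pos (hμpos x), abs_of_nonneg hf.1]
        have h4 := mul_le_mul_of_nonneg_right hf.2 (abs_nonneg (v j x))
        have h5 := mul_le_mul_of_nonneg_left h4 (hμpos x).le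
        calc μ x * (f x (uk (φ j) x) * |v j x|) ≤ μ x * (max A 0 * |v j x|) := h5
          _ = μ x * max A 0 * |v j x| := by ring
      refine squeeze_zero_norm (a := fun j => μ x * max A 0 * |v j x|) (fun j => ?_) ?_
      · rw [Real.norm_eq_abs]
        exact hball j
      · have h6 := (hvpt x).abs.const_mul (μ x * max A 0)
        simpa using h6
  -- term 3
  have hX3 : Tendsto (fun j => ∑' x, qH w μ h u (v j) x) atTop (nhds 0) := by
    refine tendsto_tsum_zero (d := eH w μ h u) (g := fun j => eH w μ h (v j)) (K := 2 * B)
      (fun x => hE0 u x) hEusum (fun j x => hE0 _ x) hEvsum (by linarith) hTv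
      (fun j x => qH_CS hwnn hlf hμpos hhpos u (v j) x) (fun x => q_tendsto hlf u hvpt x)
  -- squeeze
  have hT0 : Tendsto (fun j => ∑' x, eH w μ h (v j) x) atTop (nhds 0) := by
    have hub : ∀ j, (∑' x, eH w μ h (v j) x)
        ≤ |(∑' x, qH w μ h (uk (φ j)) (v j) x) - ∑' x, μ x * (f x (uk (φ j) x) * v j x)|
          + |∑' x, μ x * (f x (uk (φ j) x) * v j x)| + |∑' x, qH w μ h u (v j) x| := by
      intro j
      rw [hvsum_e j]
      have e1 := le_abs_self ((∑' x, qH w μ h (uk (φ j)) (v j) x)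
        - ∑' x, μ x * (f x (uk (φ j) x) * v j x))
      have e2 := le_abs_self (∑' x, μ x * (f x (uk (φ j) x) * v j x))
      have e3 := neg_abs_le (∑' x, qH w μ h u (v j) x)
      linarith
    have habs1 : Tendsto (fun j => |(∑' x, qH w μ h (uk (φ j)) (v j) x)
        - ∑' x, μ x * (f x (uk (φ j) x) * v j x)|) atTop (nhds 0) :=
      squeeze_zero (fun j => abs_nonneg _) hX1 hX1tends
    have habs2 : Tendsto (fun j => |∑' x, μ x * (f x (uk (φ j) x) * v j x)|) atTop (nhds 0) := by
      simpa using hX2.abs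
    have habs3 : Tendsto (fun j => |∑' x, qH w μ h u (v j) x|) atTop (nhds 0) := by
      simpa using hX3.abs
    have hup := (habs1.add habs2).add habs3
    rw [show (0:ℝ) + 0 + 0 = 0 by ring] at hup
    exact squeeze_zero (fun j => tsum_nonneg fun x => hE0 _ x) hub hup
  have hfinal : Tendsto (fun j => normH w μ h (v j)) atTop (nhds 0) := by
    have h1 := (Real.continuous_sqrt.tendsto 0).comp hT0
    rw [Real.sqrt_zero] at h1
    exact h1.congr fun j => rfl
  exact ⟨u, hmemHu, φ, hφ, by simpa [hv] using hfinal⟩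

end GraphNLE
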